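/- Define F(a,b,c,d) = a²d² - 4abcd + ac³ + b³d + b²c². If a sequence satisfies a_{n} a_{n-4} = a_{n-1} a_{n-3} + a_{n-2}² for all n ≥ 4 with all terms nonzero, then a_{n-2} · F(a_{n-1}, a_n, a_{n+1}, a_{n+2}) = a_{n+2} · F(a_{n-2}, a_{n-1}, a_n, a_{n+1}) for all applicable n. -/
import Mathlib


/-- The quartic polynomial from the Somos-4 analysis. -/
def somosF (a b c d : ℚ) : ℚ := a^2*d^2 - 4*a*b*c*d + a*c^3 + b^3*d + b^2*c^2

/-- If a sequence of nonzero rationals satisfies the Somos-4 recurrence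
`a n * a (n-4) = a (n-1) * a (n-3) + a (n-2)^2`, then
`a (n-2) * F(a (n-1), a n, a (n+1), a (n+2)) = a (n+2) * F(a (n-2), a (n-1), a n, a (n+1))`. -/
theorem somos_F_scaling (a : ℕ → ℚ) (hne : ∀ n, a n ≠ 0)
    (hrec : ∀ n, a (n + 4) * a n = a (n + 3) * a (n + 1) + a (n + 2) ^ 2) :
    ∀ n, a n * somosF (a (n + 1)) (a (n + 2)) (a (n + 3)) (a (n + 4))
      = a (n + 4) * somosF (a n) (a (n + 1)) (a (n + 2)) (a (n + 3)) := by
  intro n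
  unfold somosF
  linear_combination (a (n + 1) ^ 2 * a (n + 4) - a n * a (n + 3) ^ 2) * hrec n
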